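/- Let s¹, …, s^M be nonnegative real-valued random variables on a probability space, and let ξ¹, …, ξ^M > 0. Then Pr{∃ m, s^m > ξ^m} ≤ Σ_{m=1}^{M} Σ_{Λ ⊆ {1,…,M}, |Λ| = m} ( ψ(Λ) + (Σ_{i∈Λ} E[(s^i)²]) / (Σ_{i∈Λ} (ξ^i)²) ), where ψ(Λ) := Pr{ {s^i > ξ^i for all i∈Λ} | {s^i ≤ ξ^i for all i∈Λᶜ} } − Pr{ s^i > ξ^i for all i∈Λ }, with the convention that the conditional probability term is interpreted as Pr of the intersection divided by Pr of the conditioning event (and as 0 if the conditioning event is null), and Λᶜ denotes the complement of Λ in {1,…,M}. -/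

import Mathlib

open Finset MeasureTheory ProbabilityTheory

theorem chebyshev_union_bound_groups
    {Ω : Type*} [MeasurableSpace Ω] (μ : Measure Ω) [IsProbabilityMeasure μ]
    (M : ℕ) (s : Fin M → Ω → ℝ) (ξ : Fin M → ℝ)
    (hmeas : ∀ i, Measurable (s i)) (hnonneg : ∀ i ω, 0 ≤ s i ω)
    (hξ : ∀ i, 0 < ξ i)
    (hL2 : ∀ i, Integrable (fun ω => (s i ω) ^ 2) μ) :
    (μ {ω | ∃ m, s m ω > ξ m}).toReal
      ≤ ∑ m ∈ Icc 1 M, ∑ Λ ∈ powersetCard m (univ : Finset (Fin M)),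
          ((((μ[|{ω | ∀ i ∈ Λᶜ, s i ω ≤ ξ i}]) {ω | ∀ i ∈ Λ, s i ω > ξ i}).toReal
              - (μ {ω | ∀ i ∈ Λ, s i ω > ξ i}).toReal)
            + (∑ i ∈ Λ, ∫ ω, (s i ω) ^ 2 ∂μ) / (∑ i ∈ Λ, (ξ i) ^ 2)) := by
  classical
  set B : Finset (Fin M) → Set Ω := fun Λ => {ω | ∀ i ∈ Λ, s i ω > ξ i} with hB
  set C : Finset (Fin M) → Set Ω := fun Λ => {ω | ∀ i ∈ Λᶜ, s i ω ≤ ξ i} with hC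
  have hBmeas : ∀ Λ, MeasurableSet (B Λ) := by
    intro Λ
    have : B Λ = ⋂ i ∈ Λ, {ω | ξ i < s i ω} := by ext ω; simp [hB]
    rw [this]
    exact MeasurableSet.biInter (Set.to_countable _)
      (fun i _ => measurableSet_lt measurable_const (hmeas i))
  have hCmeas : ∀ Λ, MeasurableSet (C Λ) := by
    intro Λ
    have : C Λ = ⋂ i ∈ Λᶜ, {ω | s i ω ≤ ξ i} := by ext ω; simp [hC]
    rw [this]
    exact MeasurableSet.biInter (Set.to_countable _)
      (fun i _ => measurableSet_le (hmeas i) measurable_const)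
  -- covering
  have hsub : {ω | ∃ m, s m ω > ξ m}
      ⊆ ⋃ m ∈ Icc 1 M, ⋃ Λ ∈ powersetCard m (univ : Finset (Fin M)), (B Λ ∩ C Λ) := by
    intro ω hω
    obtain ⟨m0, hm0⟩ := hω
    set Λ := (univ : Finset (Fin M)).filter (fun i => ξ i < s i ω) with hΛ
    have hm0Λ : m0 ∈ Λ := by simp [hΛ, hm0]
    have hΛne : Λ.Nonempty := ⟨m0, hm0Λ⟩
    have hcard : Λ.card ∈ Icc 1 M := by
      refine mem_Icc.mpr ⟨hΛne.card_pos, ?_⟩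
      calc Λ.card ≤ (univ : Finset (Fin M)).card := card_le_card (subset_univ _)
        _ = M := by simp
    refine Set.mem_biUnion hcard (Set.mem_biUnion
      (mem_powersetCard.mpr ⟨subset_univ _, rfl⟩) ?_)
    constructor
    · intro i hi
      simpa [hΛ] using (mem_filter.mp hi).2
    · intro i hi
      have : i ∉ Λ := by simpa using hi
      have : ¬ (ξ i < s i ω) := by simpa [hΛ] using this
      exact not_lt.mp this
  -- subadditivity in ℝ≥0∞
  have hENN : μ {ω | ∃ m, s m ω > ξ m}
      ≤ ∑ m ∈ Icc 1 M, ∑ Λ ∈ powersetCard m (univ : Finset (Fin M)), μ (B Λ ∩ C Λ) := by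
    calc μ {ω | ∃ m, s m ω > ξ m}
        ≤ μ (⋃ m ∈ Icc 1 M, ⋃ Λ ∈ powersetCard m (univ : Finset (Fin M)), (B Λ ∩ C Λ)) :=
          measure_mono hsub
      _ ≤ ∑ m ∈ Icc 1 M, μ (⋃ Λ ∈ powersetCard m (univ : Finset (Fin M)), (B Λ ∩ C Λ)) :=
          measure_biUnion_finset_le _ _
      _ ≤ _ := Finset.sum_le_sum fun m _ => measure_biUnion_finset_le _ _
  -- convert to real
  have hsum_ne : (∑ m ∈ Icc 1 M, ∑ Λ ∈ powersetCard m (univ : Finset (Fin M)),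
      μ (B Λ ∩ C Λ)) ≠ ⊤ := by
    refine (ENNReal.sum_ne_top).mpr fun m _ => (ENNReal.sum_ne_top).mpr fun Λ _ => ?_
    exact measure_ne_top μ _
  have hreal : (μ {ω | ∃ m, s m ω > ξ m}).toReal
      ≤ ∑ m ∈ Icc 1 M, ∑ Λ ∈ powersetCard m (univ : Finset (Fin M)),
          (μ (B Λ ∩ C Λ)).toReal := by
    have := ENNReal.toReal_mono hsum_ne hENN
    rw [ENNReal.toReal_sum (fun m _ => (ENNReal.sum_ne_top).mpr
      fun Λ _ => measure_ne_top μ _)] at this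
    refine this.trans_eq (Finset.sum_congr rfl fun m _ => ?_)
    exact ENNReal.toReal_sum fun Λ _ => measure_ne_top μ _
  refine hreal.trans (Finset.sum_le_sum fun m hm => Finset.sum_le_sum fun Λ hΛ => ?_)
  -- per-term bound
  have hΛne : Λ.Nonempty := by
    have hc := (mem_powersetCard.mp hΛ).2
    have h1 : 1 ≤ m := (mem_Icc.mp hm).1
    exact card_pos.mp (hc ▸ h1)
  -- (a) μ (B ∩ C) ≤ cond
  have ha : (μ (B Λ ∩ C Λ)).toReal ≤ ((μ[|C Λ]) (B Λ)).toReal := by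
    rw [cond_apply (hCmeas Λ) μ (B Λ)]
    by_cases h0 : μ (C Λ) = 0
    · have : μ (B Λ ∩ C Λ) = 0 :=
        le_antisymm ((measure_mono Set.inter_subset_right).trans h0.le) (by positivity)
      simp [this]
      positivity
    · have hle : μ (B Λ ∩ C Λ) ≤ (μ (C Λ))⁻¹ * μ (C Λ ∩ B Λ) := by
        rw [Set.inter_comm]
        calc μ (C Λ ∩ B Λ) = 1 * μ (C Λ ∩ B Λ) := (one_mul _).symm
          _ ≤ (μ (C Λ))⁻¹ * μ (C Λ ∩ B Λ) :=
            by gcongr; exact ENNReal.one_le_inv.mpr prob_le_one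
      refine ENNReal.toReal_mono ?_ hle
      exact ENNReal.mul_ne_top (ENNReal.inv_ne_top.mpr h0) (measure_ne_top μ _)
  -- (b) Markov
  have hb : (μ (B Λ)).toReal ≤ (∑ i ∈ Λ, ∫ ω, (s i ω) ^ 2 ∂μ) / (∑ i ∈ Λ, (ξ i) ^ 2) := by
    set ε : ℝ := ∑ i ∈ Λ, (ξ i) ^ 2 with hε
    have hεpos : 0 < ε := by
      refine Finset.sum_pos (fun i _ => pow_pos (hξ i) 2) hΛne
    set f : Ω → ℝ := fun ω => ∑ i ∈ Λ, (s i ω) ^ 2 with hf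
    have hfint : Integrable f μ := integrable_finset_sum _ fun i _ => hL2 i
    have hfnn : 0 ≤ᵐ[μ] f :=
      Filter.Eventually.of_forall fun ω =>
        Finset.sum_nonneg fun i _ => sq_nonneg _
    have hsubB : B Λ ⊆ {ω | ε ≤ f ω} := by
      intro ω hω
      show ε ≤ f ω
      refine Finset.sum_le_sum fun i hi => ?_
      exact pow_le_pow_left₀ (hξ i).le (hω i hi).le 2
    have hmono : (μ (B Λ)).toReal ≤ (μ {ω | ε ≤ f ω}).toReal :=
      ENNReal.toReal_mono (measure_ne_top μ _) (measure_mono hsubB)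
    have hmarkov := mul_meas_ge_le_integral_of_nonneg hfnn hfint ε
    have hint : ∫ ω, f ω ∂μ = ∑ i ∈ Λ, ∫ ω, (s i ω) ^ 2 ∂μ :=
      integral_finset_sum _ fun i _ => hL2 i
    rw [hint, measureReal_def] at hmarkov
    refine hmono.trans ?_
    rw [le_div_iff₀ hεpos]
    linarith [hmarkov]
  have hcond_nn : 0 ≤ ((μ[|C Λ]) (B Λ)).toReal := ENNReal.toReal_nonneg
  have hbc : (μ (B Λ ∩ C Λ)).toReal ≤ ((μ[|C Λ]) (B Λ)).toReal := ha
  linarith [hb, hbc]
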